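/- Let A_c be a Schur stable real n×n matrix and Q a symmetric real n×n matrix. Suppose P* is a symmetric real n×n matrix satisfying the Lyapunov equation A_cᵀ P* A_c - P* + Q = 0, and P is a symmetric positive semidefinite real n×n matrix satisfying the inequality A_cᵀ P A_c - P + Q ⪰ 0. Then P ⪯ P*; in particular, trace(P) ≤ trace(P*), so P* attains the maximum of the trace over all feasible P. -/

import Mathlib

open Matrix Filter Topology

noncomputable section

attribute [local instance] Matrix.linftyOpNormedRing Matrix.linftyOpNormedAlgebra

/-- A complex square matrix is Schur stable if every eigenvalue has modulus `< 1`. -/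
def SchurStable {m : Type*} [Fintype m] [DecidableEq m] (M : Matrix m m ℂ) : Prop :=
  ∀ μ ∈ spectrum ℂ M, ‖μ‖ < 1

/-- A real square matrix is Schur stable if every complex eigenvalue has modulus `< 1`. -/
def SchurStableR {m : Type*} [Fintype m] [DecidableEq m] (M : Matrix m m ℝ) : Prop :=
  SchurStable (M.map Complex.ofReal)

lemma schur_pow_tendsto {n : ℕ} (M : Matrix (Fin n) (Fin n) ℂ) (h : SchurStable M) :
    Tendsto (fun N => M ^ N) atTop (𝓝 0) := by
  rcases Nat.eq_zero_or_pos n with hn | hn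
  · subst hn
    have : ∀ N, M ^ N = 0 := fun N => Subsingleton.elim _ _
    simpa [this] using tendsto_const_nhds (α := Matrix (Fin 0) (Fin 0) ℂ) (f := atTop)
  · haveI : Nonempty (Fin n) := ⟨⟨0, hn⟩⟩
    have hρ : spectralRadius ℂ M < 1 := by
      have := spectrum.spectralRadius_lt_of_forall_lt (a := M) (r := 1)
        (fun z hz => by simpa [← NNReal.coe_lt_coe, coe_nnnorm] using h z hz)
      simpa using this
    obtain ⟨c, hc1, hc2⟩ := exists_between hρ
    have hgel := spectrum.pow_nnnorm_pow_one_div_tendsto_nhds_spectralRadius M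
    have hev : ∀ᶠ N : ℕ in atTop, ((‖M ^ N‖₊ : ENNReal) ^ (1 / (N:ℝ))) < c :=
      hgel.eventually_lt_const hc1
    have hc2' : c ≠ ⊤ := (hc2.trans_le le_top).ne
    refine tendsto_zero_iff_norm_tendsto_zero.mpr ?_
    have hcr : c.toReal < 1 := by
      rw [← ENNReal.toReal_one]
      exact ENNReal.toReal_strict_mono ENNReal.one_ne_top hc2
    refine squeeze_zero' (.of_forall fun N => norm_nonneg _) ?_
      (tendsto_pow_atTop_nhds_zero_of_lt_one ENNReal.toReal_nonneg hcr)
    filter_upwards [hev, eventually_ge_atTop 1] with N hN hN1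
    have hNne : (N : ℝ) ≠ 0 := by positivity
    have : (‖M ^ N‖₊ : ENNReal) < c ^ (N : ℝ) := by
      have := ENNReal.rpow_lt_rpow hN (by positivity : (0:ℝ) < (N:ℝ))
      rwa [← ENNReal.rpow_mul, one_div, inv_mul_cancel₀ hNne, ENNReal.rpow_one] at this
    have := ENNReal.toReal_le_toReal (by simp) (by simp [hc2'] : c ^ (N:ℝ) ≠ ⊤) |>.mpr this.le
    rwa [ENNReal.coe_toReal, coe_nnnorm, ← ENNReal.toReal_rpow,
      Real.rpow_natCast] at this

lemma schur_pow_tendsto_real {n : ℕ} (A : Matrix (Fin n) (Fin n) ℝ) (h : SchurStableR A) :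
    ∀ i j, Tendsto (fun N => (A ^ N) i j) atTop (𝓝 0) := by
  intro i j
  have hc := schur_pow_tendsto _ h
  have hmap : ∀ N : ℕ, (A.map Complex.ofReal) ^ N = (A ^ N).map Complex.ofReal := by
    intro N
    have := map_pow (Complex.ofRealHom.mapMatrix :
      Matrix (Fin n) (Fin n) ℝ →+* Matrix (Fin n) (Fin n) ℂ) A N
    simp only [RingHom.mapMatrix_apply] at this; exact this.symm
  simp only [hmap] at hc
  have h1 : Tendsto (fun N => ((A ^ N) i j : ℂ)) atTop (𝓝 0) := by
    have := (((continuous_apply j).comp (continuous_apply i)).tendsto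
      (0 : Matrix (Fin n) (Fin n) ℂ)).comp hc
    exact this
  have := (Complex.continuous_re.tendsto 0).comp h1
  simpa [Function.comp_def] using this

lemma psd_trace_nonneg {n : ℕ} {M : Matrix (Fin n) (Fin n) ℝ} (hM : M.PosSemidef) :
    0 ≤ M.trace := by
  rw [Matrix.trace]
  refine Finset.sum_nonneg fun i _ => ?_
  have := hM.dotProduct_mulVec_nonneg (Pi.single i 1)
  simpa [Matrix.mulVec_single, dotProduct, Pi.single_apply] using this

/-- the solution `P*` of the Lyapunov equation associated with a Schur stable
closed-loop matrix `A_c` dominates, in the Loewner order, every symmetric PSD `P` satisfying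
the Lyapunov inequality `A_cᵀ P A_c - P + Q ⪰ 0`; in particular it maximizes the trace. -/
theorem lyapunov_solution_trace_maximizing {n : ℕ}
    (Ac Q Pstar P : Matrix (Fin n) (Fin n) ℝ)
    (hAc : SchurStableR Ac)
    (hQsymm : Q.IsSymm)
    (hPstarSymm : Pstar.IsSymm)
    (hPstarEq : Acᵀ * Pstar * Ac - Pstar + Q = 0)
    (hPsymm : P.IsSymm) (hPpsd : P.PosSemidef)
    (hPineq : (Acᵀ * P * Ac - P + Q).PosSemidef) :
    (Pstar - P).PosSemidef ∧ P.trace ≤ Pstar.trace := by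
  set R := Acᵀ * P * Ac - P + Q with hR
  set D := Pstar - P with hDdef
  have h1 : Acᵀ * Pstar * Ac = Pstar - Q := by
    apply sub_eq_zero.mp; rw [← hPstarEq]; abel
  have hD : D = Acᵀ * D * Ac + R := by
    rw [hDdef, hR, Matrix.mul_sub, Matrix.sub_mul, h1]; abel
  have key : ∀ N : ℕ, D =
      (Ac ^ N)ᵀ * D * Ac ^ N + ∑ k ∈ Finset.range N, (Ac ^ k)ᵀ * R * Ac ^ k := by
    intro N
    induction N with
    | zero => simp
    | succ N ih =>
      calc D = Acᵀ * D * Ac + R := hD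
        _ = Acᵀ * ((Ac ^ N)ᵀ * D * Ac ^ N
              + ∑ k ∈ Finset.range N, (Ac ^ k)ᵀ * R * Ac ^ k) * Ac + R := by rw [← ih]
        _ = (Ac ^ (N + 1))ᵀ * D * Ac ^ (N + 1)
              + ∑ k ∈ Finset.range (N + 1), (Ac ^ k)ᵀ * R * Ac ^ k := by
            rw [Finset.sum_range_succ']
            simp only [Matrix.mul_add, Matrix.add_mul, Finset.mul_sum, Finset.sum_mul,
              pow_succ, pow_zero, Matrix.transpose_mul, Matrix.transpose_one,
              Matrix.one_mul, Matrix.mul_one, Matrix.mul_assoc]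
            abel
  have hRpsd : R.PosSemidef := hPineq
  have hDpsd : D.PosSemidef := by
    refine Matrix.PosSemidef.of_dotProduct_mulVec_nonneg ?_ ?_
    · show Dᴴ = D
      rw [Matrix.conjTranspose_eq_transpose_of_trivial, hDdef, Matrix.transpose_sub,
        hPstarSymm.eq, hPsymm.eq]
    · intro x
      simp only [star_trivial]
      -- quadratic form pieces
      have hterm : ∀ k : ℕ, 0 ≤ x ⬝ᵥ ((Ac ^ k)ᵀ * R * Ac ^ k) *ᵥ x := by
        intro k
        have hpsd : ((Ac ^ k)ᴴ * R * Ac ^ k).PosSemidef :=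
          hRpsd.conjTranspose_mul_mul_same (Ac ^ k)
        rw [Matrix.conjTranspose_eq_transpose_of_trivial] at hpsd
        simpa [star_trivial] using hpsd.dotProduct_mulVec_nonneg x
      have hsum : ∀ N : ℕ, 0 ≤ x ⬝ᵥ (∑ k ∈ Finset.range N, (Ac ^ k)ᵀ * R * Ac ^ k) *ᵥ x := by
        intro N
        induction N with
        | zero => simp
        | succ N ih =>
          rw [Finset.sum_range_succ, Matrix.add_mulVec, dotProduct_add]
          exact add_nonneg ih (hterm N)
      -- tail tends to zero
      set y : ℕ → Fin n → ℝ := fun N => (Ac ^ N) *ᵥ x with hy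
      have hyt : Tendsto y atTop (𝓝 0) := by
        rw [tendsto_pi_nhds]
        intro i
        have : (fun N => y N i) = fun N => ∑ j, (Ac ^ N) i j * x j := by
          funext N; simp [hy, Matrix.mulVec, dotProduct]
        rw [this]
        have := tendsto_finset_sum (Finset.univ : Finset (Fin n))
          (fun j _ => (schur_pow_tendsto_real Ac hAc i j).mul_const (x j))
        simpa using this
      have hqc : Continuous fun v : Fin n → ℝ => v ⬝ᵥ D *ᵥ v := by
        unfold dotProduct Matrix.mulVec
        exact continuous_finset_sum _ fun i _ => (continuous_apply i).mul
          (continuous_finset_sum _ fun j _ => continuous_const.mul (continuous_apply j))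
      have htail : Tendsto (fun N => y N ⬝ᵥ D *ᵥ y N) atTop (𝓝 0) := by
        have := (hqc.tendsto 0).comp hyt
        simpa [Function.comp_def] using this
      have hsplit : ∀ N : ℕ, x ⬝ᵥ D *ᵥ x
          = y N ⬝ᵥ D *ᵥ y N + x ⬝ᵥ (∑ k ∈ Finset.range N, (Ac ^ k)ᵀ * R * Ac ^ k) *ᵥ x := by
        intro N
        conv_lhs => rw [key N]
        rw [Matrix.add_mulVec, dotProduct_add]
        congr 1
        rw [hy, ← Matrix.mulVec_mulVec, ← Matrix.mulVec_mulVec,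
          Matrix.dotProduct_mulVec x, Matrix.vecMul_transpose]
      have hmono : Tendsto (fun N => x ⬝ᵥ D *ᵥ x - y N ⬝ᵥ D *ᵥ y N) atTop (𝓝 (x ⬝ᵥ D *ᵥ x)) := by
        simpa using (tendsto_const_nhds (x := x ⬝ᵥ D *ᵥ x) (f := atTop)).sub htail
      refine ge_of_tendsto' hmono fun N => ?_
      rw [hsplit N]
      simpa using hsum N
  refine ⟨hDpsd, ?_⟩
  have := psd_trace_nonneg hDpsd
  rw [hDdef, Matrix.trace_sub] at this
  linarith
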